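/- arXiv:2008.04809 — 6 statements merged into one kernel-verified Lean document; each statement's English description precedes it below -/
import Mathlib

section
/- (Theorem 2.) Let t₀ ∈ ℝ. Let ξ : ℝ → ℝ² and z : ℝ → ℝ be differentiable on [t₀, ∞), let Ω : ℝ → ℝ², g : ℝ → ℝ, Δ : ℝ → ℝ be functions, let H be a real 2×2 matrix, and let constants satisfy: k₁ > 0 with ⟨x, H·x⟩ ≥ k₁·‖x‖² for all x ∈ ℝ²; Γ > 0; σ₁ > 0 and S ≥ σ₁; L_g ≥ 0; D ≥ 0; and the gain condition K_CL > L_g/(σ₁·Γ). Suppose for all t ≥ t₀: ξ'(t) = −H·ξ(t) + z(t)·Ω(t); z'(t) = −Γ·⟨Ω(t), ξ(t)⟩ + g(t) − K_CL·Γ·(S·z(t) + Δ(t)); |g(t)| ≤ L_g·|z(t)|; and |Δ(t)| ≤ D. Define c₃ = min{1/2, 1/(2Γ)}, c₄ = max{1/2, 1/(2Γ)}, k₃ = K_CL·σ₁ − L_g/Γ, α₁ = min{k₁, k₃/2}, β₂ = K_CL·D/√(2·k₃·α₁), and e(t) = √(‖ξ(t)‖² + z(t)²). Then for all t ≥ t₀,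 e(t) ≤ √( (c₄/c₃)·( e(t₀)²·exp(−(α₁/c₄)·(t − t₀)) + β₂²·(1 − exp(−(α₁/c₄)·(t − t₀))) ) ); in particular the error is uniformly ultimately bounded with limsup_{t → ∞} e(t) ≤ √(c₄/c₃)·β₂. -/
open scoped InnerProductSpace Topology

private lemma sqrt_add_le' (a b : ℝ) (ha : 0 ≤ a) (hb : 0 ≤ b) :
    Real.sqrt (a + b) ≤ Real.sqrt a + Real.sqrt b := by
  have h := Real.sqrt_le_sqrt (show a + b ≤ (Real.sqrt a + Real.sqrt b) ^ 2 by
    nlinarith [Real.sq_sqrt ha, Real.sq_sqrt hb,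
      mul_nonneg (Real.sqrt_nonneg a) (Real.sqrt_nonneg b)])
  rwa [Real.sqrt_sq (by positivity)] at h

set_option maxHeartbeats 1000000 in
/-- Theorem 2: UUB of the full-order concurrent-learning observer error when the
history stack is complete, without persistence of excitation, under the gain condition
`K_CL > L_g/(σ₁·Γ)`. -/
theorem full_order_complete_stack_UUB
    (t₀ : ℝ) (ξ : ℝ → EuclideanSpace ℝ (Fin 2)) (z : ℝ → ℝ)
    (Ω : ℝ → EuclideanSpace ℝ (Fin 2)) (g Δ : ℝ → ℝ)
    (H : Matrix (Fin 2) (Fin 2) ℝ)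
    (k₁ Γ σ₁ S Lg D KCL : ℝ)
    (hk₁ : 0 < k₁)
    (hH : ∀ x : EuclideanSpace ℝ (Fin 2), k₁ * ‖x‖ ^ 2 ≤ ⟪x, Matrix.toEuclideanLin H x⟫_ℝ)
    (hΓ : 0 < Γ) (hσ₁ : 0 < σ₁) (hS : σ₁ ≤ S) (hLg : 0 ≤ Lg) (hD : 0 ≤ D)
    (hgain : Lg / (σ₁ * Γ) < KCL)
    (hξ : ∀ t ∈ Set.Ici t₀, HasDerivAt ξ
      (-(Matrix.toEuclideanLin H (ξ t)) + z t • Ω t) t)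
    (hz : ∀ t ∈ Set.Ici t₀, HasDerivAt z
      (-(Γ * ⟪Ω t, ξ t⟫_ℝ) + g t - KCL * Γ * (S * z t + Δ t)) t)
    (hg : ∀ t ∈ Set.Ici t₀, |g t| ≤ Lg * |z t|)
    (hΔ : ∀ t ∈ Set.Ici t₀, |Δ t| ≤ D)
    (c₃ c₄ k₃ α₁ β₂ : ℝ)
    (hc₃ : c₃ = min (1 / 2) (1 / (2 * Γ)))
    (hc₄ : c₄ = max (1 / 2) (1 / (2 * Γ)))
    (hk₃ : k₃ = KCL * σ₁ - Lg / Γ)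
    (hα₁ : α₁ = min k₁ (k₃ / 2))
    (hβ₂ : β₂ = KCL * D / Real.sqrt (2 * k₃ * α₁))
    (e : ℝ → ℝ)
    (he : ∀ t, e t = Real.sqrt (‖ξ t‖ ^ 2 + z t ^ 2)) :
    (∀ t ∈ Set.Ici t₀,
      e t ≤ Real.sqrt ((c₄ / c₃) *
        (e t₀ ^ 2 * Real.exp (-(α₁ / c₄) * (t - t₀))
          + β₂ ^ 2 * (1 - Real.exp (-(α₁ / c₄) * (t - t₀)))))) ∧
    Filter.limsup e Filter.atTop ≤ Real.sqrt (c₄ / c₃) * β₂ := by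
  -- basic constants
  have hKCL : 0 < KCL :=
    lt_of_le_of_lt (div_nonneg hLg (mul_pos hσ₁ hΓ).le) hgain
  have hk₃pos : 0 < k₃ := by
    rw [hk₃]
    rw [div_lt_iff₀ (mul_pos hσ₁ hΓ)] at hgain
    rw [sub_pos, div_lt_iff₀ hΓ]
    nlinarith
  have hα₁pos : 0 < α₁ := by rw [hα₁]; exact lt_min hk₁ (by linarith)
  have hc₃pos : 0 < c₃ := by rw [hc₃]; exact lt_min (by norm_num) (by positivity)
  have hc₄pos : 0 < c₄ := by
    rw [hc₄]; exact lt_of_lt_of_le (by norm_num : (0:ℝ) < 1/2) (le_max_left _ _)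
  have hc₃half : c₃ ≤ 1 / 2 := by rw [hc₃]; exact min_le_left _ _
  have hc₃Γ : c₃ ≤ 1 / (2 * Γ) := by rw [hc₃]; exact min_le_right _ _
  have hc₄half : 1 / 2 ≤ c₄ := by rw [hc₄]; exact le_max_left _ _
  have hc₄Γ : 1 / (2 * Γ) ≤ c₄ := by rw [hc₄]; exact le_max_right _ _
  have hα₁k₁ : α₁ ≤ k₁ := by rw [hα₁]; exact min_le_left _ _
  have hα₁k₃ : α₁ ≤ k₃ / 2 := by rw [hα₁]; exact min_le_right _ _
  set l : ℝ := α₁ / c₄ with hldef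
  have hlpos : 0 < l := div_pos hα₁pos hc₄pos
  have hβ₂sq : β₂ ^ 2 = (KCL * D) ^ 2 / (2 * k₃ * α₁) := by
    rw [hβ₂, div_pow, Real.sq_sqrt (by positivity)]
  have hβ₂nonneg : 0 ≤ β₂ := by
    rw [hβ₂]; exact div_nonneg (mul_nonneg hKCL.le hD) (Real.sqrt_nonneg _)
  -- the Lyapunov function and its derivative
  set ε : ℝ := (KCL * D) ^ 2 / (2 * k₃) with hεdef
  have hεeq : l * (c₄ * β₂ ^ 2) = ε := by
    rw [hβ₂sq, hεdef, hldef]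
    field_simp
  set V : ℝ → ℝ := fun t => (1 / 2) * ‖ξ t‖ ^ 2 + (1 / (2 * Γ)) * z t ^ 2 with hVdef
  set Vd : ℝ → ℝ := fun t =>
    (1 / 2) * (⟪ξ t, -(Matrix.toEuclideanLin H (ξ t)) + z t • Ω t⟫_ℝ
      + ⟪-(Matrix.toEuclideanLin H (ξ t)) + z t • Ω t, ξ t⟫_ℝ)
    + (1 / (2 * Γ)) * ((-(Γ * ⟪Ω t, ξ t⟫_ℝ) + g t - KCL * Γ * (S * z t + Δ t)) * z t
      + z t * (-(Γ * ⟪Ω t, ξ t⟫_ℝ) + g t - KCL * Γ * (S * z t + Δ t))) with hVddef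
  have hVD : ∀ t ∈ Set.Ici t₀, HasDerivAt V (Vd t) t := by
    intro t ht
    have h1 : HasDerivAt (fun s => ⟪ξ s, ξ s⟫_ℝ)
        (⟪ξ t, -(Matrix.toEuclideanLin H (ξ t)) + z t • Ω t⟫_ℝ
          + ⟪-(Matrix.toEuclideanLin H (ξ t)) + z t • Ω t, ξ t⟫_ℝ) t :=
      (hξ t ht).inner ℝ (hξ t ht)
    have h1' : HasDerivAt (fun s => ‖ξ s‖ ^ 2)
        (⟪ξ t, -(Matrix.toEuclideanLin H (ξ t)) + z t • Ω t⟫_ℝ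
          + ⟪-(Matrix.toEuclideanLin H (ξ t)) + z t • Ω t, ξ t⟫_ℝ) t := by
      have : (fun s => ⟪ξ s, ξ s⟫_ℝ) = fun s => ‖ξ s‖ ^ 2 := by
        funext s; exact real_inner_self_eq_norm_sq _
      rwa [this] at h1
    have h2 : HasDerivAt (fun s => z s ^ 2)
        ((-(Γ * ⟪Ω t, ξ t⟫_ℝ) + g t - KCL * Γ * (S * z t + Δ t)) * z t
          + z t * (-(Γ * ⟪Ω t, ξ t⟫_ℝ) + g t - KCL * Γ * (S * z t + Δ t))) t := by
      have := (hz t ht).mul (hz t ht)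
      have hzz : (z * z) = fun s => z s ^ 2 := by funext s; rw [Pi.mul_apply]; ring
      rwa [hzz] at this
    exact (h1'.const_mul (1 / 2)).add (h2.const_mul (1 / (2 * Γ)))
  -- key differential inequality
  have hkey : ∀ t ∈ Set.Ici t₀, Vd t + l * (V t - c₄ * β₂ ^ 2) ≤ 0 := by
    intro t ht
    have hΓ' : Γ ≠ 0 := ne_of_gt hΓ
    set n := ‖ξ t‖ ^ 2 with hn
    set w := z t with hw
    have hnn : 0 ≤ n := by positivity
    have hww : 0 ≤ w ^ 2 := sq_nonneg w
    -- simplify Vd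
    have hVdeq : Vd t = -⟪ξ t, Matrix.toEuclideanLin H (ξ t)⟫_ℝ
        + (w * g t) / Γ - KCL * S * w ^ 2 - KCL * (w * Δ t) := by
      rw [hVddef]
      simp only [inner_add_right, inner_add_left, inner_neg_right, inner_neg_left,
        real_inner_smul_right, real_inner_smul_left]
      rw [real_inner_comm (Matrix.toEuclideanLin H (ξ t)) (ξ t),
        real_inner_comm (Ω t) (ξ t)]
      field_simp
      ring
    have hA : k₁ * n ≤ ⟪ξ t, Matrix.toEuclideanLin H (ξ t)⟫_ℝ := hH (ξ t)
    have hzg : w * g t ≤ Lg * w ^ 2 := by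
      have h1 : w * g t ≤ |w * g t| := le_abs_self _
      have h2 : |w * g t| = |w| * |g t| := abs_mul _ _
      have h3 : |w| * |g t| ≤ |w| * (Lg * |w|) :=
        mul_le_mul_of_nonneg_left (hg t ht) (abs_nonneg w)
      have h4 : |w| * (Lg * |w|) = Lg * w ^ 2 := by
        rw [show |w| * (Lg * |w|) = Lg * (|w| * |w|) by ring, ← abs_mul, abs_mul_self]
        ring
      linarith
    have hzΔ : -(w * Δ t) ≤ D * |w| :=
      calc -(w * Δ t) ≤ |w * Δ t| := neg_le_abs _
        _ = |w| * |Δ t| := abs_mul _ _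
        _ ≤ |w| * D := mul_le_mul_of_nonneg_left (hΔ t ht) (abs_nonneg w)
        _ = D * |w| := mul_comm _ _
    have habs : |w| ^ 2 = w ^ 2 := sq_abs w
    have hAM : KCL * (D * |w|) ≤ k₃ / 2 * w ^ 2 + ε := by
      have hsq : 0 ≤ (k₃ * |w| - KCL * D) ^ 2 := sq_nonneg _
      have h2 : KCL * (D * |w|) * (2 * k₃) ≤ (k₃ / 2 * |w| ^ 2 + ε) * (2 * k₃) := by
        have hexp : (k₃ / 2 * |w| ^ 2 + ε) * (2 * k₃)
            = k₃ ^ 2 * |w| ^ 2 + (KCL * D) ^ 2 := by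
          rw [hεdef]; field_simp
        rw [hexp]
        linarith [hsq]
      have h2' := le_of_mul_le_mul_right h2 (by positivity : (0:ℝ) < 2 * k₃)
      rwa [sq_abs] at h2'
    -- Vd t ≤ -k₁ n - k₃ w² + KCL (D |w|)
    have hstep1 : Vd t ≤ -(k₁ * n) - k₃ * w ^ 2 + KCL * (D * |w|) := by
      rw [hVdeq, hk₃]
      have hΩbd : (w * g t) / Γ ≤ (Lg / Γ) * w ^ 2 := by
        have h := mul_le_mul_of_nonneg_right hzg hΓ.le
        rw [div_mul_eq_mul_div, div_le_div_iff₀ hΓ hΓ]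
        linarith
      have hSbd : KCL * S * w ^ 2 ≥ KCL * σ₁ * w ^ 2 :=
        mul_le_mul_of_nonneg_right (mul_le_mul_of_nonneg_left hS hKCL.le) hww
      have hΔbd : -(KCL * (w * Δ t)) ≤ KCL * (D * |w|) := by
        rw [show -(KCL * (w * Δ t)) = KCL * (-(w * Δ t)) by ring]
        exact mul_le_mul_of_nonneg_left hzΔ hKCL.le
      have := hA
      linarith
    -- V t ≤ c₄ (n + w²)
    have hVub : V t ≤ c₄ * (n + w ^ 2) := by
      rw [hVdef]
      have h1 : (1 / 2) * n ≤ c₄ * n := mul_le_mul_of_nonneg_right hc₄half hnn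
      have h2 : (1 / (2 * Γ)) * w ^ 2 ≤ c₄ * w ^ 2 := mul_le_mul_of_nonneg_right hc₄Γ hww
      simp only []
      linarith
    have hlV : l * V t ≤ α₁ * (n + w ^ 2) := by
      have h1 : l * V t ≤ l * (c₄ * (n + w ^ 2)) := mul_le_mul_of_nonneg_left hVub hlpos.le
      have h2 : l * (c₄ * (n + w ^ 2)) = α₁ * (n + w ^ 2) := by
        rw [hldef]; field_simp
      linarith
    have hαn : α₁ * (n + w ^ 2) ≤ k₁ * n + k₃ / 2 * w ^ 2 := by
      have p1 := mul_le_mul_of_nonneg_right hα₁k₁ hnn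
      have p2 := mul_le_mul_of_nonneg_right hα₁k₃ hww
      linarith
    have hsplit : l * (V t - c₄ * β₂ ^ 2) = l * V t - ε := by
      rw [mul_sub, hεeq]
    linarith [hstep1, hAM, hlV, hαn, hsplit.le, hsplit.ge]
  -- the auxiliary decreasing function
  set φ : ℝ → ℝ := fun t => (V t - c₄ * β₂ ^ 2) * Real.exp (l * (t - t₀)) with hφdef
  have hφD : ∀ t ∈ Set.Ici t₀, HasDerivAt φ
      ((Vd t + l * (V t - c₄ * β₂ ^ 2)) * Real.exp (l * (t - t₀))) t := by
    intro t ht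
    have hexp : HasDerivAt (fun s => Real.exp (l * (s - t₀)))
        (Real.exp (l * (t - t₀)) * l) t := by
      have hlin : HasDerivAt (fun s : ℝ => l * (s - t₀)) l t := by
        simpa using ((hasDerivAt_id t).sub_const t₀).const_mul l
      exact hlin.exp
    have : HasDerivAt φ (Vd t * Real.exp (l * (t - t₀)) + (V t - c₄ * β₂ ^ 2) * (Real.exp (l * (t - t₀)) * l)) t :=
      ((hVD t ht).sub_const (c₄ * β₂ ^ 2)).mul hexp
    convert this using 1
    ring
  have hφanti : AntitoneOn φ (Set.Ici t₀) := by
    apply antitoneOn_of_deriv_nonpos (convex_Ici t₀)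
    · exact fun t ht => (hφD t ht).continuousAt.continuousWithinAt
    · intro t ht
      rw [interior_Ici] at ht
      exact ((hφD t (Set.mem_Ici.2 (le_of_lt ht))).differentiableAt).differentiableWithinAt
    · intro t ht
      rw [interior_Ici] at ht
      rw [(hφD t (Set.mem_Ici.2 (le_of_lt ht))).deriv]
      exact mul_nonpos_of_nonpos_of_nonneg (hkey t (Set.mem_Ici.2 (le_of_lt ht))) (Real.exp_pos _).le
  -- the pointwise bound
  have hmain : ∀ t ∈ Set.Ici t₀,
      e t ≤ Real.sqrt ((c₄ / c₃) *
        (e t₀ ^ 2 * Real.exp (-l * (t - t₀))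
          + β₂ ^ 2 * (1 - Real.exp (-l * (t - t₀))))) := by
    intro t ht
    have hφt : φ t ≤ φ t₀ := hφanti (Set.self_mem_Ici) ht ht
    have hφt₀ : φ t₀ = V t₀ - c₄ * β₂ ^ 2 := by
      rw [hφdef]; simp
    set E := Real.exp (l * (t - t₀)) with hE
    set F := Real.exp (-l * (t - t₀)) with hF
    have hEpos : 0 < E := Real.exp_pos _
    have hFpos : 0 < F := Real.exp_pos _
    have hFle : F ≤ 1 := by
      rw [hF, Real.exp_le_one_iff]
      have : 0 ≤ l * (t - t₀) := mul_nonneg hlpos.le (sub_nonneg.2 ht)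
      linarith
    have hEF : E * F = 1 := by
      rw [hE, hF, ← Real.exp_add, show l * (t - t₀) + -l * (t - t₀) = 0 by ring,
        Real.exp_zero]
    have hφineq : (V t - c₄ * β₂ ^ 2) * E ≤ V t₀ - c₄ * β₂ ^ 2 := by
      rw [← hφt₀]; exact hφt
    have h1 : V t - c₄ * β₂ ^ 2 ≤ (V t₀ - c₄ * β₂ ^ 2) * F := by
      have := mul_le_mul_of_nonneg_right hφineq hFpos.le
      calc V t - c₄ * β₂ ^ 2 = (V t - c₄ * β₂ ^ 2) * (E * F) := by rw [hEF]; ring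
        _ = (V t - c₄ * β₂ ^ 2) * E * F := by ring
        _ ≤ (V t₀ - c₄ * β₂ ^ 2) * F := this
    -- lower bound on V t, upper bound on V t₀
    have hVlb : c₃ * (‖ξ t‖ ^ 2 + z t ^ 2) ≤ V t := by
      rw [hVdef]
      have h1 : c₃ * ‖ξ t‖ ^ 2 ≤ (1 / 2) * ‖ξ t‖ ^ 2 :=
        mul_le_mul_of_nonneg_right hc₃half (by positivity)
      have h2 : c₃ * z t ^ 2 ≤ (1 / (2 * Γ)) * z t ^ 2 :=
        mul_le_mul_of_nonneg_right hc₃Γ (sq_nonneg _)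
      simp only []
      linarith
    have het₀ : e t₀ ^ 2 = ‖ξ t₀‖ ^ 2 + z t₀ ^ 2 := by
      rw [he]; exact Real.sq_sqrt (by positivity)
    have hVub₀ : V t₀ ≤ c₄ * e t₀ ^ 2 := by
      rw [hVdef, het₀]
      have h1 : (1 / 2) * ‖ξ t₀‖ ^ 2 ≤ c₄ * ‖ξ t₀‖ ^ 2 :=
        mul_le_mul_of_nonneg_right hc₄half (by positivity)
      have h2 : (1 / (2 * Γ)) * z t₀ ^ 2 ≤ c₄ * z t₀ ^ 2 :=
        mul_le_mul_of_nonneg_right hc₄Γ (sq_nonneg _)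
      simp only []
      linarith
    rw [he]
    apply Real.sqrt_le_sqrt
    rw [div_mul_eq_mul_div, le_div_iff₀ hc₃pos]
    have hVF : V t₀ * F ≤ c₄ * e t₀ ^ 2 * F := mul_le_mul_of_nonneg_right hVub₀ hFpos.le
    linarith [hVlb, h1, hVF]
  constructor
  · intro t ht
    have := hmain t ht
    rwa [show -l * (t - t₀) = -(α₁ / c₄) * (t - t₀) by rw [hldef]] at this
  -- limsup part
  · set L : ℝ := Real.sqrt (c₄ / c₃) * β₂ with hLdef
    have hLnn : 0 ≤ L := mul_nonneg (Real.sqrt_nonneg _) hβ₂nonneg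
    have hLsq : Real.sqrt ((c₄ / c₃) * β₂ ^ 2) = L := by
      rw [Real.sqrt_mul (by positivity), Real.sqrt_sq hβ₂nonneg]
    set G : ℝ → ℝ := fun t => Real.sqrt ((c₄ / c₃) * (e t₀ ^ 2 * Real.exp (-l * (t - t₀))))
      with hGdef
    have hbound : ∀ t ∈ Set.Ici t₀, e t ≤ G t + L := by
      intro t ht
      refine le_trans (hmain t ht) ?_
      set F := Real.exp (-l * (t - t₀)) with hF
      have hFpos : 0 < F := Real.exp_pos _
      have hFle : F ≤ 1 := by
        rw [hF, Real.exp_le_one_iff]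
        have h0 : 0 ≤ l * (t - t₀) := mul_nonneg hlpos.le (sub_nonneg.2 ht)
        linarith
      have h1 : (c₄ / c₃) * (e t₀ ^ 2 * F + β₂ ^ 2 * (1 - F))
          ≤ (c₄ / c₃) * (e t₀ ^ 2 * F) + (c₄ / c₃) * β₂ ^ 2 := by
        have hx : 0 ≤ (c₄ / c₃) * (β₂ ^ 2 * F) := by positivity
        linarith
      refine le_trans (Real.sqrt_le_sqrt h1) ?_
      refine le_trans (sqrt_add_le' _ _ (by positivity) (by positivity)) ?_
      rw [hLsq]
    have hGtends : Filter.Tendsto G Filter.atTop (𝓝 0) := by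
      have hexp : Filter.Tendsto (fun t : ℝ => Real.exp (-l * (t - t₀)))
          Filter.atTop (𝓝 0) := by
        apply Real.tendsto_exp_atBot.comp
        rw [show (fun t : ℝ => -l * (t - t₀)) = fun t : ℝ => -(l * (t - t₀)) by
          funext t; ring]
        rw [Filter.tendsto_neg_atBot_iff]
        apply Filter.Tendsto.const_mul_atTop hlpos
        exact Filter.tendsto_atTop_add_const_right _ (-t₀) Filter.tendsto_id
      have h2 : Filter.Tendsto (fun t : ℝ => (c₄ / c₃) * (e t₀ ^ 2 * Real.exp (-l * (t - t₀))))
          Filter.atTop (𝓝 0) := by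
        have := (hexp.const_mul (e t₀ ^ 2)).const_mul (c₄ / c₃)
        simpa using this
      have := (Real.continuous_sqrt.continuousAt (x := (0 : ℝ))).tendsto.comp h2
      simpa [hGdef, Function.comp_def] using this
    have hcob : Filter.IsCoboundedUnder (· ≤ ·) Filter.atTop e := by
      apply Filter.IsBoundedUnder.isCoboundedUnder_le
      exact Filter.isBoundedUnder_of ⟨0, fun t => by rw [he]; exact Real.sqrt_nonneg _⟩
    apply le_of_forall_pos_le_add
    intro ε' hε'
    apply Filter.limsup_le_of_le hcob
    have hev1 : ∀ᶠ t in Filter.atTop, G t < ε' := hGtends.eventually (gt_mem_nhds hε')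
    have hev2 : ∀ᶠ t in Filter.atTop, t₀ ≤ t := Filter.eventually_ge_atTop t₀
    filter_upwards [hev1, hev2] with t h1 h2
    have := hbound t h2
    linarith
end

section
/- Let t₀ ∈ ℝ. Let ξ : ℝ → ℝ² and z : ℝ → ℝ be differentiable on [t₀, ∞), let Ω : ℝ → ℝ², g, Δ : ℝ → ℝ, let H be a real 2×2 matrix with ⟨x, H·x⟩ ≥ k₁·‖x‖² for all x ∈ ℝ² (k₁ > 0), and let Γ > 0, σ₁ > 0, S ≥ σ₁, L_g ≥ 0, D ≥ 0, K_CL > L_g/(σ₁·Γ). Suppose for all t ≥ t₀: ξ'(t) = −H·ξ(t) + z(t)·Ω(t); z'(t) = −Γ·⟨Ω(t), ξ(t)⟩ + g(t) − K_CL·Γ·(S·z(t) + Δ(t)); |g(t)| ≤ L_g·|z(t)|; |Δ(t)| ≤ D. Then the function V(t) = (1/2)·‖ξ(t)‖² + (1/(2Γ))·z(t)² satisfies, for all t ≥ t₀, V'(t) ≤ −k₁·‖ξ(t)‖² − (k₃/2)·z(t)² + (K_CL²·D²)/(2·k₃) ≤ −(α₁/c₄)·V(t) + (K_CL²·D²)/(2·k₃),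 where k₃ = K_CL·σ₁ − L_g/Γ, α₁ = min{k₁, k₃/2} and c₄ = max{1/2, 1/(2Γ)}. -/
open scoped InnerProductSpace

set_option maxHeartbeats 1000000 in
/-- Lyapunov derivative inequality for the full-order concurrent-learning observer error
dynamics when the history stack is complete:
`V'(t) ≤ −k₁‖ξ‖² − (k₃/2)z² + K_CL²D²/(2k₃) ≤ −(α₁/c₄)V + K_CL²D²/(2k₃)`. -/
theorem full_order_complete_stack_lyapunov_inequality
    (t₀ : ℝ) (ξ : ℝ → EuclideanSpace ℝ (Fin 2)) (z : ℝ → ℝ)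
    (Ω : ℝ → EuclideanSpace ℝ (Fin 2)) (g Δ : ℝ → ℝ)
    (H : Matrix (Fin 2) (Fin 2) ℝ)
    (k₁ Γ σ₁ S Lg D KCL : ℝ)
    (hk₁ : 0 < k₁)
    (hH : ∀ x : EuclideanSpace ℝ (Fin 2), k₁ * ‖x‖ ^ 2 ≤ ⟪x, Matrix.toEuclideanLin H x⟫_ℝ)
    (hΓ : 0 < Γ) (hσ₁ : 0 < σ₁) (hS : σ₁ ≤ S) (hLg : 0 ≤ Lg) (hD : 0 ≤ D)
    (hgain : Lg / (σ₁ * Γ) < KCL)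
    (hξ : ∀ t ∈ Set.Ici t₀, HasDerivAt ξ
      (-(Matrix.toEuclideanLin H (ξ t)) + z t • Ω t) t)
    (hz : ∀ t ∈ Set.Ici t₀, HasDerivAt z
      (-(Γ * ⟪Ω t, ξ t⟫_ℝ) + g t - KCL * Γ * (S * z t + Δ t)) t)
    (hg : ∀ t ∈ Set.Ici t₀, |g t| ≤ Lg * |z t|)
    (hΔ : ∀ t ∈ Set.Ici t₀, |Δ t| ≤ D)
    (k₃ α₁ c₄ : ℝ)
    (hk₃ : k₃ = KCL * σ₁ - Lg / Γ)
    (hα₁ : α₁ = min k₁ (k₃ / 2))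
    (hc₄ : c₄ = max (1 / 2) (1 / (2 * Γ)))
    (V : ℝ → ℝ)
    (hV : ∀ t, V t = (1 / 2) * ‖ξ t‖ ^ 2 + (1 / (2 * Γ)) * z t ^ 2) :
    ∀ t ∈ Set.Ici t₀,
      deriv V t ≤ -k₁ * ‖ξ t‖ ^ 2 - (k₃ / 2) * z t ^ 2 + KCL ^ 2 * D ^ 2 / (2 * k₃) ∧
      -k₁ * ‖ξ t‖ ^ 2 - (k₃ / 2) * z t ^ 2 + KCL ^ 2 * D ^ 2 / (2 * k₃)
        ≤ -(α₁ / c₄) * V t + KCL ^ 2 * D ^ 2 / (2 * k₃) := by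
  intro t ht
  have hKCL : 0 < KCL := lt_of_le_of_lt (div_nonneg hLg (by positivity)) hgain
  have hgain' : Lg / Γ < KCL * σ₁ := by
    have := mul_lt_mul_of_pos_right hgain hσ₁
    have h1 : Lg / (σ₁ * Γ) * σ₁ = Lg / Γ := by field_simp
    linarith [h1 ▸ this]
  have hk₃pos : 0 < k₃ := by rw [hk₃]; linarith
  -- derivative of V
  set ξ' := -(Matrix.toEuclideanLin H (ξ t)) + z t • Ω t with hξ'def
  set z' := -(Γ * ⟪Ω t, ξ t⟫_ℝ) + g t - KCL * Γ * (S * z t + Δ t) with hz'def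
  have hξt := hξ t ht
  have hzt := hz t ht
  have hVeq : V = fun s => (1 / 2) * ⟪ξ s, ξ s⟫_ℝ + (1 / (2 * Γ)) * z s ^ 2 := by
    funext s; rw [hV s, real_inner_self_eq_norm_sq]
  have hVder : HasDerivAt V (⟪ξ t, ξ'⟫_ℝ + (1 / Γ) * (z t * z')) t := by
    rw [hVeq]
    have h1 : HasDerivAt (fun s => ⟪ξ s, ξ s⟫_ℝ) (⟪ξ t, ξ'⟫_ℝ + ⟪ξ', ξ t⟫_ℝ) t :=
      hξt.inner ℝ hξt
    have h2 : HasDerivAt (fun s => z s ^ 2) (2 * z t ^ 1 * z') t := hzt.pow 2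
    have h := (h1.const_mul (1 / 2 : ℝ)).add (h2.const_mul (1 / (2 * Γ)))
    refine h.congr_deriv ?_
    rw [real_inner_comm ξ' (ξ t)]
    field_simp
    ring
  rw [hVder.deriv]
  -- expand the derivative value
  have hinner : ⟪ξ t, ξ'⟫_ℝ = -⟪ξ t, Matrix.toEuclideanLin H (ξ t)⟫_ℝ
      + z t * ⟪Ω t, ξ t⟫_ℝ := by
    rw [hξ'def, inner_add_right, inner_neg_right, real_inner_smul_right,
      real_inner_comm (ξ t) (Ω t)]
  have hderiv_eq : ⟪ξ t, ξ'⟫_ℝ + (1 / Γ) * (z t * z')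
      = -⟪ξ t, Matrix.toEuclideanLin H (ξ t)⟫_ℝ + (z t * g t) / Γ
        - KCL * (S * z t ^ 2) - KCL * (z t * Δ t) := by
    rw [hinner, hz'def]
    field_simp
    ring
  -- bounds
  have habs1 : z t * g t ≤ Lg * z t ^ 2 := by
    calc z t * g t ≤ |z t * g t| := le_abs_self _
    _ = |z t| * |g t| := abs_mul _ _
    _ ≤ |z t| * (Lg * |z t|) := by
        exact mul_le_mul_of_nonneg_left (hg t ht) (abs_nonneg _)
    _ = Lg * z t ^ 2 := by rw [← sq_abs (z t)]; ring
  have habs2 : -(KCL * (z t * Δ t)) ≤ KCL * (|z t| * D) := by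
    have h1 : -(z t * Δ t) ≤ |z t * Δ t| := neg_le_abs _
    have h2 : |z t * Δ t| ≤ |z t| * D := by
      rw [abs_mul]
      exact mul_le_mul_of_nonneg_left (hΔ t ht) (abs_nonneg _)
    nlinarith
  have hyoung : KCL * (|z t| * D) ≤ (k₃ / 2) * z t ^ 2 + KCL ^ 2 * D ^ 2 / (2 * k₃) := by
    have hsq : (0:ℝ) ≤ (k₃ * |z t| - KCL * D) ^ 2 := sq_nonneg _
    have hz2 : |z t| ^ 2 = z t ^ 2 := sq_abs _
    have key : KCL * (|z t| * D) - (k₃ / 2) * z t ^ 2 ≤ KCL ^ 2 * D ^ 2 / (2 * k₃) := by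
      rw [le_div_iff₀ (by positivity), ← hz2]
      nlinarith [hsq]
    linarith
  have hSσ : KCL * σ₁ * z t ^ 2 ≤ KCL * (S * z t ^ 2) := by
    have := mul_le_mul_of_nonneg_right
      (mul_le_mul_of_nonneg_left hS hKCL.le) (sq_nonneg (z t))
    linarith [this]
  have hHbound := hH (ξ t)
  have hzg : (z t * g t) / Γ ≤ (Lg / Γ) * z t ^ 2 := by
    rw [div_le_iff₀ hΓ]
    calc z t * g t ≤ Lg * z t ^ 2 := habs1
    _ = Lg / Γ * z t ^ 2 * Γ := by field_simp
  have hk₃z : (Lg / Γ) * z t ^ 2 - KCL * σ₁ * z t ^ 2 = -k₃ * z t ^ 2 := by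
    rw [hk₃]; ring
  constructor
  · rw [hderiv_eq]
    have hHb : -⟪ξ t, Matrix.toEuclideanLin H (ξ t)⟫_ℝ ≤ -(k₁ * ‖ξ t‖ ^ 2) := by linarith
    linarith [hzg, hSσ, habs2, hyoung]
  · -- second inequality
    have hα₁pos : 0 < α₁ := by rw [hα₁]; exact lt_min hk₁ (by linarith)
    have hα₁k₁ : α₁ ≤ k₁ := hα₁ ▸ min_le_left _ _
    have hα₁k₃ : α₁ ≤ k₃ / 2 := hα₁ ▸ min_le_right _ _
    have hc₄half : 1 / 2 ≤ c₄ := hc₄ ▸ le_max_left _ _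
    have hc₄Γ : 1 / (2 * Γ) ≤ c₄ := hc₄ ▸ le_max_right _ _
    have hc₄pos : 0 < c₄ := lt_of_lt_of_le (by norm_num) hc₄half
    have h1 : α₁ / c₄ * (1 / 2) ≤ k₁ := by
      rw [div_mul_eq_mul_div, div_le_iff₀ hc₄pos]
      calc α₁ * (1 / 2) ≤ α₁ * c₄ := mul_le_mul_of_nonneg_left hc₄half hα₁pos.le
        _ ≤ k₁ * c₄ := mul_le_mul_of_nonneg_right hα₁k₁ hc₄pos.le
    have h2 : α₁ / c₄ * (1 / (2 * Γ)) ≤ k₃ / 2 := by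
      rw [div_mul_eq_mul_div, div_le_iff₀ hc₄pos]
      calc α₁ * (1 / (2 * Γ)) ≤ α₁ * c₄ := mul_le_mul_of_nonneg_left hc₄Γ hα₁pos.le
        _ ≤ k₃ / 2 * c₄ := mul_le_mul_of_nonneg_right hα₁k₃ hc₄pos.le
    rw [hV t]
    have e1 := mul_le_mul_of_nonneg_right h1 (sq_nonneg ‖ξ t‖)
    have e2 := mul_le_mul_of_nonneg_right h2 (sq_nonneg (z t))
    have expand : (α₁ / c₄) * ((1 / 2) * ‖ξ t‖ ^ 2 + (1 / (2 * Γ)) * z t ^ 2)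
        = α₁ / c₄ * (1 / 2) * ‖ξ t‖ ^ 2 + α₁ / c₄ * (1 / (2 * Γ)) * z t ^ 2 := by ring
    linarith
end

section
/- Let s = (x, y) : ℝ → ℝ² and v = (v_X, v_Y, v_Z) : ℝ → ℝ³ be differentiable functions of time. Define θ(t) = (x(t), y(t), −(x(t)² + y(t)²)/2) ∈ ℝ³ and Ω(t) = (x(t)·v_Z(t) − v_X(t), y(t)·v_Z(t) − v_Y(t)) ∈ ℝ². Then for all t, the derivative of the scalar function t ↦ ⟨θ(t), v(t)⟩ equals −⟨Ω(t), s'(t)⟩ + ⟨θ(t), v'(t)⟩. -/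
open scoped InnerProductSpace

noncomputable section

abbrev E2 := EuclideanSpace ℝ (Fin 2)
abbrev E3 := EuclideanSpace ℝ (Fin 3)

/-- `θ(t) = (x(t), y(t), −(x(t)² + y(t)²)/2)` for `s = (x, y)`. -/
def theta (s : E2) : E3 := WithLp.toLp 2 ![s 0, s 1, -(s 0 ^ 2 + s 1 ^ 2) / 2]

/-- The regressor `Ω(s, v) = (x·v_Z − v_X, y·v_Z − v_Y)`. -/
def Omg (s : E2) (v : E3) : E2 := WithLp.toLp 2 ![s 0 * v 2 - v 0, s 1 * v 2 - v 1]

/-- The output-injection identity underlying the reduced-order depth observer: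
`d/dt ⟨θ(t), v(t)⟩ = −⟨Ω(t), s'(t)⟩ + ⟨θ(t), v'(t)⟩`. -/
theorem theta_inner_v_deriv
    (s : ℝ → E2) (v : ℝ → E3) (s' : ℝ → E2) (v' : ℝ → E3)
    (hs : ∀ t, HasDerivAt s (s' t) t) (hv : ∀ t, HasDerivAt v (v' t) t) :
    ∀ t, HasDerivAt (fun τ => ⟪theta (s τ), v τ⟫_ℝ)
      (-⟪Omg (s t) (v t), s' t⟫_ℝ + ⟪theta (s t), v' t⟫_ℝ) t := by
  intro t
  have hsc : ∀ (i : Fin 2), ∀ u, HasDerivAt (fun τ => s τ i) (s' u i) u := fun i u => by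
    exact (EuclideanSpace.proj i).hasFDerivAt.comp_hasDerivAt u (hs u)
  have hvc : ∀ (i : Fin 3), ∀ u, HasDerivAt (fun τ => v τ i) (v' u i) u := fun i u => by
    exact (EuclideanSpace.proj i).hasFDerivAt.comp_hasDerivAt u (hv u)
  have key : HasDerivAt (fun τ => s τ 0 * v τ 0 + s τ 1 * v τ 1
      + (-(s τ 0 ^ 2 + s τ 1 ^ 2) / 2) * v τ 2)
      (-((s t 0 * v t 2 - v t 0) * s' t 0 + (s t 1 * v t 2 - v t 1) * s' t 1)
        + (s t 0 * v' t 0 + s t 1 * v' t 1 + (-(s t 0 ^ 2 + s t 1 ^ 2) / 2) * v' t 2)) t := by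
    have := (((hsc 0 t).mul (hvc 0 t)).add ((hsc 1 t).mul (hvc 1 t))).add
      (((((((hsc 0 t).pow 2).add ((hsc 1 t).pow 2)).neg).div_const 2)).mul (hvc 2 t))
    refine this.congr_deriv ?_
    simp only [Pi.neg_apply, Pi.add_apply, Pi.pow_apply, Nat.cast_ofNat]
    ring
  convert key using 2 with τ <;>
    simp [theta, Omg, PiLp.inner_apply, Fin.sum_univ_two, Fin.sum_univ_three] <;> ring
end
end

section
/- (Theorem 3.) Let t₀ ∈ ℝ, let z : ℝ → ℝ be continuous on [t₀, ∞), and let constants c₅, c₆, k₄, γ₂, δ satisfy 0 < c₅ ≤ c₆, k₄ > 0, γ₂ > 0, δ ≥ 0, where δ = K̄·σ̄·(M−1)·χ̄ for nonnegative constants K̄, σ̄, χ̄ and M ∈ ℕ with M ≥ 1. Suppose there is a function W : ℝ → ℝ (the Lyapunov function evaluated along the depth error trajectory) that is differentiable on [t₀, ∞) and satisfies, for all t ≥ t₀: c₅·z(t)² ≤ W(t) ≤ c₆·z(t)² and W'(t) ≤ −k₄·z(t)² + γ₂·|z(t)|·δ. Then for all t ≥ t₀, |z(t)| ≤ √( (c₆/c₅)·(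 z(t₀)²·exp(−(k₄/(2c₆))·(t − t₀)) + β₃²·(1 − exp(−(k₄/(2c₆))·(t − t₀))) ) ), where β₃ = γ₂·δ/k₄. In particular the error is uniformly ultimately bounded: limsup_{t → ∞} |z(t)| ≤ √(c₆/c₅)·β₃ = √(c₆/c₅)·γ₂·K̄·σ̄·(M−1)·χ̄/k₄. -/
private lemma aux_sqrt_tendsto (C A B L t₀ : ℝ) (hL : 0 < L) :
    Filter.Tendsto
      (fun t : ℝ => Real.sqrt (C * (A * Real.exp (-L * (t - t₀)) + B * (1 - Real.exp (-L * (t - t₀))))))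
      Filter.atTop (nhds (Real.sqrt (C * B))) := by
  have hexp_tendsto : Filter.Tendsto (fun t : ℝ => Real.exp (-L * (t - t₀)))
      Filter.atTop (nhds 0) := by
    apply Real.tendsto_exp_atBot.comp
    apply Filter.Tendsto.const_mul_atTop_of_neg (neg_lt_zero.mpr hL)
    exact Filter.tendsto_atTop_add_const_right _ (-t₀) Filter.tendsto_id
  have h1 : Filter.Tendsto
      (fun t : ℝ => C * (A * Real.exp (-L * (t - t₀)) + B * (1 - Real.exp (-L * (t - t₀)))))
      Filter.atTop (nhds (C * (A * 0 + B * (1 - 0)))) :=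
    (((hexp_tendsto.const_mul _).add
      ((tendsto_const_nhds.sub hexp_tendsto).const_mul _))).const_mul _
  have h2 := (Real.continuous_sqrt.tendsto _).comp h1
  simp only [mul_zero, sub_zero, zero_add, mul_one] at h2
  exact h2

/-- Theorem 3: UUB of the reduced-order concurrent-learning observer depth error when
the history stack is incomplete and persistence of excitation holds (encoded through the
existence of the Lyapunov function `W` with quadratic sandwich bounds and the stated
dissipation inequality along the error trajectory). -/
theorem reduced_order_incomplete_stack_UUB
    (t₀ : ℝ) (z : ℝ → ℝ) (hz : ContinuousOn z (Set.Ici t₀))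
    (c₅ c₆ k₄ γ₂ δ Kbar σbar χbar : ℝ) (M : ℕ) (hM : 1 ≤ M)
    (hc₅ : 0 < c₅) (hc₅₆ : c₅ ≤ c₆) (hk₄ : 0 < k₄) (hγ₂ : 0 < γ₂) (hδ : 0 ≤ δ)
    (hKbar : 0 ≤ Kbar) (hσbar : 0 ≤ σbar) (hχbar : 0 ≤ χbar)
    (hδdef : δ = Kbar * σbar * ((M : ℝ) - 1) * χbar)
    (W : ℝ → ℝ)
    (hWdiff : ∀ t ∈ Set.Ici t₀, DifferentiableAt ℝ W t)
    (hWlow : ∀ t ∈ Set.Ici t₀, c₅ * z t ^ 2 ≤ W t)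
    (hWhigh : ∀ t ∈ Set.Ici t₀, W t ≤ c₆ * z t ^ 2)
    (hWderiv : ∀ t ∈ Set.Ici t₀, deriv W t ≤ -k₄ * z t ^ 2 + γ₂ * |z t| * δ) :
    (∀ t ∈ Set.Ici t₀,
      |z t| ≤ Real.sqrt ((c₆ / c₅) *
        (z t₀ ^ 2 * Real.exp (-(k₄ / (2 * c₆)) * (t - t₀))
          + (γ₂ * δ / k₄) ^ 2 * (1 - Real.exp (-(k₄ / (2 * c₆)) * (t - t₀)))))) ∧
    Filter.limsup (fun t => |z t|) Filter.atTop ≤ Real.sqrt (c₆ / c₅) * (γ₂ * δ / k₄) ∧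
    Real.sqrt (c₆ / c₅) * (γ₂ * δ / k₄)
      = Real.sqrt (c₆ / c₅) * γ₂ * Kbar * σbar * ((M : ℝ) - 1) * χbar / k₄ := by
  have hc₆ : 0 < c₆ := lt_of_lt_of_le hc₅ hc₅₆
  set l : ℝ := k₄ / (2 * c₆) with hl
  have hlpos : 0 < l := by positivity
  set β : ℝ := γ₂ * δ / k₄ with hβ
  have hβ0 : 0 ≤ β := by positivity
  -- Improved derivative bound via Young's inequality and the sandwich
  have key : ∀ t ∈ Set.Ici t₀, deriv W t ≤ -l * W t + l * c₆ * β ^ 2 := by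
    intro t ht
    have h1 := hWderiv t ht
    have h2 := hWhigh t ht
    have hyoung : γ₂ * |z t| * δ ≤ k₄ / 2 * z t ^ 2 + (γ₂ * δ) ^ 2 / (2 * k₄) := by
      have habs : z t ^ 2 = |z t| ^ 2 := (sq_abs (z t)).symm
      rw [habs, ← sub_nonneg]
      have hid : k₄ / 2 * |z t| ^ 2 + (γ₂ * δ) ^ 2 / (2 * k₄) - γ₂ * |z t| * δ
          = (k₄ * |z t| - γ₂ * δ) ^ 2 / (2 * k₄) := by
        field_simp
        ring
      rw [hid]; positivity
    have hlc : l * c₆ * β ^ 2 = (γ₂ * δ) ^ 2 / (2 * k₄) := by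
      rw [hl, hβ]; field_simp
    have hWz : -(k₄ / 2) * z t ^ 2 ≤ -l * W t := by
      have : l * W t ≤ l * (c₆ * z t ^ 2) := by
        exact mul_le_mul_of_nonneg_left h2 hlpos.le
      have hlc6 : l * c₆ = k₄ / 2 := by rw [hl]; field_simp
      nlinarith
    nlinarith
  -- The function F is antitone on [t₀, ∞)
  set F : ℝ → ℝ := fun t => Real.exp (l * (t - t₀)) * (W t - c₆ * β ^ 2) with hF
  have hFderiv : ∀ t ∈ Set.Ici t₀, HasDerivAt F
      (Real.exp (l * (t - t₀)) * (l * 1) * (W t - c₆ * β ^ 2)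
        + Real.exp (l * (t - t₀)) * deriv W t) t := by
    intro t ht
    have he : HasDerivAt (fun t => Real.exp (l * (t - t₀))) (Real.exp (l * (t - t₀)) * (l * 1)) t :=
      (((hasDerivAt_id t).sub_const t₀).const_mul l).exp
    exact he.mul (((hWdiff t ht).hasDerivAt).sub_const (c₆ * β ^ 2))
  have hFanti : AntitoneOn F (Set.Ici t₀) := by
    apply antitoneOn_of_deriv_nonpos (convex_Ici t₀)
    · intro t ht
      exact ((hFderiv t ht).differentiableAt).continuousAt.continuousWithinAt
    · intro t ht
      rw [interior_Ici] at ht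
      exact ((hFderiv t (Set.mem_Ici.mpr (le_of_lt (Set.mem_Ioi.mp ht)))).differentiableAt).differentiableWithinAt
    · intro t ht
      rw [interior_Ici] at ht
      have ht' : t ∈ Set.Ici t₀ := Set.mem_Ici.mpr (le_of_lt (Set.mem_Ioi.mp ht))
      rw [(hFderiv t ht').deriv]
      have hk := key t ht'
      have hexp : (0:ℝ) < Real.exp (l * (t - t₀)) := Real.exp_pos _
      nlinarith [mul_le_mul_of_nonneg_left hk hexp.le]
  -- pointwise bound on W
  have hWbound : ∀ t ∈ Set.Ici t₀,
      W t ≤ c₆ * (z t₀ ^ 2 * Real.exp (-l * (t - t₀)) + β ^ 2 * (1 - Real.exp (-l * (t - t₀)))) := by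
    intro t ht
    have hFt : F t ≤ F t₀ := hFanti (Set.self_mem_Ici) ht ht
    have hF0 : F t₀ = W t₀ - c₆ * β ^ 2 := by
      simp [hF]
    have hW0 : W t₀ ≤ c₆ * z t₀ ^ 2 := hWhigh t₀ Set.self_mem_Ici
    have hexp : (0:ℝ) < Real.exp (l * (t - t₀)) := Real.exp_pos _
    have hexpinv : Real.exp (-l * (t - t₀)) = (Real.exp (l * (t - t₀)))⁻¹ := by
      rw [← Real.exp_neg]; ring_nf
    rw [hF0] at hFt
    have hFt' : W t - c₆ * β ^ 2 ≤ (W t₀ - c₆ * β ^ 2) * Real.exp (-l * (t - t₀)) := by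
      rw [hexpinv, le_mul_inv_iff₀ hexp]
      calc (W t - c₆ * β ^ 2) * Real.exp (l * (t - t₀))
          = F t := by rw [hF]; ring
        _ ≤ W t₀ - c₆ * β ^ 2 := hFt
    have hexp2 : (0:ℝ) < Real.exp (-l * (t - t₀)) := Real.exp_pos _
    nlinarith [mul_le_mul_of_nonneg_right hW0 hexp2.le]
  -- the main pointwise bound
  have main : ∀ t ∈ Set.Ici t₀,
      |z t| ≤ Real.sqrt ((c₆ / c₅) *
        (z t₀ ^ 2 * Real.exp (-l * (t - t₀)) + β ^ 2 * (1 - Real.exp (-l * (t - t₀))))) := by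
    intro t ht
    have h1 := hWlow t ht
    have h2 := hWbound t ht
    have hz2 : z t ^ 2 ≤ (c₆ / c₅) *
        (z t₀ ^ 2 * Real.exp (-l * (t - t₀)) + β ^ 2 * (1 - Real.exp (-l * (t - t₀)))) := by
      rw [div_mul_eq_mul_div, le_div_iff₀ hc₅]
      nlinarith
    calc |z t| = Real.sqrt (z t ^ 2) := by
          rw [Real.sqrt_sq_eq_abs]
      _ ≤ _ := Real.sqrt_le_sqrt hz2
  refine ⟨main, ?_, ?_⟩
  · -- limsup bound
    have hgt : Filter.Tendsto (fun t : ℝ => Real.sqrt ((c₆ / c₅) *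
        (z t₀ ^ 2 * Real.exp (-l * (t - t₀)) + β ^ 2 * (1 - Real.exp (-l * (t - t₀))))))
        Filter.atTop (nhds (Real.sqrt ((c₆ / c₅) * β ^ 2))) :=
      aux_sqrt_tendsto (c₆ / c₅) (z t₀ ^ 2) (β ^ 2) l t₀ hlpos
    have h3 : Real.sqrt ((c₆ / c₅) * β ^ 2) = Real.sqrt (c₆ / c₅) * β := by
      rw [Real.sqrt_mul (by positivity), Real.sqrt_sq hβ0]
    rw [h3] at hgt
    have hle : ∀ᶠ t in Filter.atTop, |z t| ≤ Real.sqrt ((c₆ / c₅) *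
        (z t₀ ^ 2 * Real.exp (-l * (t - t₀)) + β ^ 2 * (1 - Real.exp (-l * (t - t₀))))) := by
      filter_upwards [Filter.eventually_ge_atTop t₀] with t ht
      exact main t ht
    calc Filter.limsup (fun t => |z t|) Filter.atTop
        ≤ Filter.limsup (fun t : ℝ => Real.sqrt ((c₆ / c₅) *
            (z t₀ ^ 2 * Real.exp (-l * (t - t₀)) + β ^ 2 * (1 - Real.exp (-l * (t - t₀))))))
            Filter.atTop := by
          exact Filter.limsup_le_limsup hle
            (Filter.isCoboundedUnder_le_of_le _ (fun t => abs_nonneg (z t)))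
            hgt.isBoundedUnder_le
      _ = Real.sqrt (c₆ / c₅) * β := hgt.limsup_eq
  · subst hδdef; rw [hβ]; ring
end

section
/- (Theorem 4.) Let t₀ ∈ ℝ, let z : ℝ → ℝ be differentiable on [t₀, ∞), let g, Δ : ℝ → ℝ be functions, and let constants satisfy σ₁ > 0, S ≥ σ₁, L_g ≥ 0, δ ≥ 0, and the gain condition K̄ > L_g/σ₁. Suppose for all t ≥ t₀: z'(t) = −K̄·(S·z(t) + Δ(t)) + g(t); |g(t)| ≤ L_g·|z(t)|; and |Δ(t)| ≤ δ. Define k₅ = K̄·σ₁ − L_g and β₄ = K̄·δ/k₅. Then for all t ≥ t₀, |z(t)| ≤ √( z(t₀)²·exp(−k₅·(t − t₀)) + β₄²·(1 − exp(−k₅·(t − t₀))) ); in particular the depth estimation error is uniformly ultimately bounded with limsup_{t → ∞} |z(t)| ≤ β₄. -/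
open Set Filter Real
open scoped Topology

/-- Theorem 4: UUB of the reduced-order concurrent-learning observer depth error when
the history stack is complete, without persistence of excitation, under the gain
condition `K̄ > L_g/σ₁`. -/
theorem reduced_order_complete_stack_UUB
    (t₀ : ℝ) (z : ℝ → ℝ) (g Δ : ℝ → ℝ)
    (σ₁ S Lg δ Kbar : ℝ)
    (hσ₁ : 0 < σ₁) (hS : σ₁ ≤ S) (hLg : 0 ≤ Lg) (hδ : 0 ≤ δ)
    (hgain : Lg / σ₁ < Kbar)
    (hz : ∀ t ∈ Set.Ici t₀, HasDerivAt z (-Kbar * (S * z t + Δ t) + g t) t)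
    (hg : ∀ t ∈ Set.Ici t₀, |g t| ≤ Lg * |z t|)
    (hΔ : ∀ t ∈ Set.Ici t₀, |Δ t| ≤ δ)
    (k₅ β₄ : ℝ) (hk₅ : k₅ = Kbar * σ₁ - Lg) (hβ₄ : β₄ = Kbar * δ / k₅) :
    (∀ t ∈ Set.Ici t₀,
      |z t| ≤ Real.sqrt (z t₀ ^ 2 * Real.exp (-k₅ * (t - t₀))
        + β₄ ^ 2 * (1 - Real.exp (-k₅ * (t - t₀))))) ∧
    Filter.limsup (fun t => |z t|) Filter.atTop ≤ β₄ := by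
  have hKbar : 0 < Kbar := lt_of_le_of_lt (div_nonneg hLg hσ₁.le) hgain
  have hk5pos : 0 < k₅ := by
    rw [hk₅]; have := (div_lt_iff₀ hσ₁).mp hgain; linarith
  have hβ₄nn : 0 ≤ β₄ := by
    rw [hβ₄]; positivity
  have hKδ : Kbar * δ = k₅ * β₄ := by
    rw [hβ₄]; field_simp
  -- The Lyapunov function V = z² and its derivative
  set V : ℝ → ℝ := fun t => z t ^ 2 with hV
  set V' : ℝ → ℝ := fun t => 2 * z t * (-Kbar * (S * z t + Δ t) + g t) with hV'
  have hVd : ∀ x ∈ Set.Ici t₀, HasDerivAt V (V' x) x := by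
    intro x hx
    have h := ((hz x hx).fun_pow 2)
    simpa [hV, hV', mul_comm, mul_assoc, mul_left_comm] using h
  -- derivative bound
  have hbound : ∀ x ∈ Set.Ici t₀, V' x ≤ -k₅ * V x + k₅ * β₄ ^ 2 := by
    intro x hx
    have h3 := hg x hx
    have h4 := hΔ x hx
    have h8' : z x * g x ≤ Lg * z x ^ 2 := by
      calc z x * g x ≤ |z x * g x| := le_abs_self _
        _ = |z x| * |g x| := abs_mul _ _
        _ ≤ |z x| * (Lg * |z x|) := mul_le_mul_of_nonneg_left h3 (abs_nonneg _)
        _ = Lg * |z x| ^ 2 := by ring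
        _ = Lg * z x ^ 2 := by rw [sq_abs]
    have h2' : -(z x * Δ x) ≤ δ * |z x| := by
      calc -(z x * Δ x) ≤ |z x * Δ x| := neg_le_abs _
        _ = |z x| * |Δ x| := abs_mul _ _
        _ ≤ |z x| * δ := mul_le_mul_of_nonneg_left h4 (abs_nonneg _)
        _ = δ * |z x| := by ring
    have p : Kbar * -(z x * Δ x) ≤ Kbar * (δ * |z x|) :=
      mul_le_mul_of_nonneg_left h2' hKbar.le
    have h10 : Kbar * (σ₁ * z x ^ 2) ≤ Kbar * (S * z x ^ 2) :=
      mul_le_mul_of_nonneg_left (mul_le_mul_of_nonneg_right hS (sq_nonneg _)) hKbar.le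
    have h11' : 2 * (k₅ * β₄) * |z x| ≤ k₅ * |z x| ^ 2 + k₅ * β₄ ^ 2 := by
      nlinarith [mul_nonneg hk5pos.le (sq_nonneg (|z x| - β₄))]
    have h6' : k₅ * |z x| ^ 2 = k₅ * z x ^ 2 := by rw [sq_abs]
    have e : Kbar * (δ * |z x|) = k₅ * β₄ * |z x| := by
      rw [← mul_assoc, hKδ]
    simp only [hV, hV']
    rw [hk₅] at h11' h6' e ⊢
    nlinarith [h8', p, h10, h11', h6', e]
  -- Grönwall on [t₀, b]
  have key : ∀ t ∈ Set.Ici t₀,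
      V t ≤ gronwallBound (V t₀) (-k₅) (k₅ * β₄ ^ 2) (t - t₀) := by
    intro b hb
    have hcont : ContinuousOn V (Icc t₀ b) := fun x hx =>
      ((hVd x hx.1).continuousAt).continuousWithinAt
    have hslope : ∀ x ∈ Ico t₀ b, ∀ r, V' x < r →
        ∃ᶠ w in 𝓝[>] x, (w - x)⁻¹ * (V w - V x) < r := by
      intro x hx r hr
      have hd : HasDerivWithinAt V (V' x) (Ici x) x :=
        (hVd x hx.1).hasDerivWithinAt
      have ht : Tendsto (slope V x) (𝓝[>] x) (𝓝 (V' x)) := by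
        have := hasDerivWithinAt_iff_tendsto_slope.mp hd
        rwa [Set.Ici_sdiff_left] at this
      have hev : ∀ᶠ w in 𝓝[>] x, slope V x w < r := ht (Iio_mem_nhds hr)
      refine hev.frequently.mono fun w hw => ?_
      rwa [slope_def_field, div_eq_inv_mul] at hw
    exact le_gronwallBound_of_liminf_deriv_right_le hcont hslope le_rfl
      (fun x hx => hbound x hx.1) b ⟨hb, le_rfl⟩
  -- rewrite the bound
  have hGB : ∀ t : ℝ, gronwallBound (V t₀) (-k₅) (k₅ * β₄ ^ 2) (t - t₀)
      = z t₀ ^ 2 * Real.exp (-k₅ * (t - t₀)) + β₄ ^ 2 * (1 - Real.exp (-k₅ * (t - t₀))) := by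
    intro t
    rw [gronwallBound_of_K_ne_0 (neg_ne_zero.mpr hk5pos.ne')]
    have hd : k₅ * β₄ ^ 2 / (-k₅) = -β₄ ^ 2 := by
      rw [div_neg, mul_comm, mul_div_assoc, div_self hk5pos.ne', mul_one]
    show z t₀ ^ 2 * Real.exp (-k₅ * (t - t₀)) + k₅ * β₄ ^ 2 / (-k₅) * (Real.exp (-k₅ * (t - t₀)) - 1) = _
    rw [hd]
    ring
  have main : ∀ t ∈ Set.Ici t₀,
      |z t| ≤ Real.sqrt (z t₀ ^ 2 * Real.exp (-k₅ * (t - t₀))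
        + β₄ ^ 2 * (1 - Real.exp (-k₅ * (t - t₀)))) := by
    intro t ht
    have h := key t ht
    rw [hGB t] at h
    calc |z t| = Real.sqrt (z t ^ 2) := (Real.sqrt_sq_eq_abs _).symm
      _ ≤ _ := Real.sqrt_le_sqrt h
  refine ⟨main, ?_⟩
  -- limsup part
  set h : ℝ → ℝ := fun t => Real.sqrt (z t₀ ^ 2 * Real.exp (-k₅ * (t - t₀))
        + β₄ ^ 2 * (1 - Real.exp (-k₅ * (t - t₀)))) with hh
  have htend_exp : Tendsto (fun t => Real.exp (-k₅ * (t - t₀))) atTop (𝓝 0) := by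
    apply Real.tendsto_exp_atBot.comp
    apply Tendsto.const_mul_atTop_of_neg (by linarith : (-k₅ : ℝ) < 0)
    exact tendsto_atTop_add_const_right _ _ tendsto_id
  have htend : Tendsto h atTop (𝓝 β₄) := by
    have h1 : Tendsto (fun t => z t₀ ^ 2 * Real.exp (-k₅ * (t - t₀))
        + β₄ ^ 2 * (1 - Real.exp (-k₅ * (t - t₀)))) atTop
        (𝓝 (z t₀ ^ 2 * 0 + β₄ ^ 2 * (1 - 0))) :=
      (htend_exp.const_mul (z t₀ ^ 2)).add
        (((tendsto_const_nhds (x := (1 : ℝ))).sub htend_exp).const_mul (β₄ ^ 2))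
    have h2 : Tendsto (fun t => z t₀ ^ 2 * Real.exp (-k₅ * (t - t₀))
        + β₄ ^ 2 * (1 - Real.exp (-k₅ * (t - t₀)))) atTop (𝓝 (β₄ ^ 2)) := by
      simpa using h1
    have h3 := (Real.continuous_sqrt.tendsto _).comp h2
    simpa [hh, Function.comp_def, Real.sqrt_sq hβ₄nn] using h3
  have hev : (fun t => |z t|) ≤ᶠ[atTop] h :=
    (eventually_ge_atTop t₀).mono fun t ht => main t ht
  calc Filter.limsup (fun t => |z t|) Filter.atTop
      ≤ Filter.limsup h Filter.atTop := by
        exact Filter.limsup_le_limsup hev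
          (Filter.isCoboundedUnder_le_of_le _ fun t => abs_nonneg _)
          htend.isBoundedUnder_le
    _ = β₄ := htend.limsup_eq
end

section
/- Let t₀ ∈ ℝ, let z : ℝ → ℝ be differentiable on [t₀, ∞), let g, Δ : ℝ → ℝ, and let σ₁ > 0, S ≥ σ₁, L_g ≥ 0, δ ≥ 0, K̄ > L_g/σ₁. Suppose for all t ≥ t₀: z'(t) = −K̄·(S·z(t) + Δ(t)) + g(t); |g(t)| ≤ L_g·|z(t)|; |Δ(t)| ≤ δ. Then the function V(t) = (1/2)·z(t)² satisfies, for all t ≥ t₀, V'(t) ≤ −(k₅/2)·z(t)² + (K̄·δ)²/(2·k₅) = −k₅·V(t) + (K̄·δ)²/(2·k₅), where k₅ = K̄·σ₁ − L_g. -/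
/-- Lyapunov derivative inequality for the reduced-order concurrent-learning observer
error dynamics when the history stack is complete:
`V'(t) ≤ −(k₅/2)z² + (K̄δ)²/(2k₅) = −k₅V + (K̄δ)²/(2k₅)` for `V = z²/2`. -/
theorem reduced_order_complete_stack_lyapunov_inequality
    (t₀ : ℝ) (z : ℝ → ℝ) (g Δ : ℝ → ℝ)
    (σ₁ S Lg δ Kbar : ℝ)
    (hσ₁ : 0 < σ₁) (hS : σ₁ ≤ S) (hLg : 0 ≤ Lg) (hδ : 0 ≤ δ)
    (hgain : Lg / σ₁ < Kbar)
    (hz : ∀ t ∈ Set.Ici t₀, HasDerivAt z (-Kbar * (S * z t + Δ t) + g t) t)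
    (hg : ∀ t ∈ Set.Ici t₀, |g t| ≤ Lg * |z t|)
    (hΔ : ∀ t ∈ Set.Ici t₀, |Δ t| ≤ δ)
    (k₅ : ℝ) (hk₅ : k₅ = Kbar * σ₁ - Lg)
    (V : ℝ → ℝ) (hV : ∀ t, V t = (1 / 2) * z t ^ 2) :
    ∀ t ∈ Set.Ici t₀,
      deriv V t ≤ -(k₅ / 2) * z t ^ 2 + (Kbar * δ) ^ 2 / (2 * k₅) ∧
      -(k₅ / 2) * z t ^ 2 + (Kbar * δ) ^ 2 / (2 * k₅)
        = -k₅ * V t + (Kbar * δ) ^ 2 / (2 * k₅) := by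
  intro t ht
  have hK : 0 < Kbar := lt_of_le_of_lt (div_nonneg hLg hσ₁.le) hgain
  have hLK : Lg < Kbar * σ₁ := by
    have := (div_lt_iff₀ hσ₁).mp hgain
    linarith [this]
  have hk5pos : 0 < k₅ := by rw [hk₅]; linarith
  have hVe : V = fun s => (1 / 2) * z s ^ 2 := funext hV
  have hVd : HasDerivAt V (z t * (-Kbar * (S * z t + Δ t) + g t)) t := by
    rw [hVe]
    have h := ((hz t ht).pow 2).const_mul (1 / 2 : ℝ)
    refine h.congr_deriv ?_
    ring
  have hdV : deriv V t = z t * (-Kbar * (S * z t + Δ t) + g t) := hVd.deriv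
  constructor
  · rw [hdV]
    have h1 : z t * g t ≤ Lg * z t ^ 2 := by
      calc z t * g t ≤ |z t * g t| := le_abs_self _
        _ = |z t| * |g t| := abs_mul _ _
        _ ≤ |z t| * (Lg * |z t|) :=
            mul_le_mul_of_nonneg_left (hg t ht) (abs_nonneg _)
        _ = Lg * |z t| ^ 2 := by ring
        _ = Lg * z t ^ 2 := by rw [sq_abs]
    have h2 : -(z t * (Kbar * Δ t)) ≤ Kbar * δ * |z t| := by
      calc -(z t * (Kbar * Δ t)) ≤ |z t * (Kbar * Δ t)| := neg_le_abs _
        _ = |z t| * (Kbar * |Δ t|) := by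
            rw [abs_mul, abs_mul, abs_of_pos hK]
        _ ≤ |z t| * (Kbar * δ) :=
            mul_le_mul_of_nonneg_left
              (mul_le_mul_of_nonneg_left (hΔ t ht) hK.le) (abs_nonneg _)
        _ = Kbar * δ * |z t| := by ring
    have h3 : Kbar * σ₁ * z t ^ 2 ≤ Kbar * S * z t ^ 2 := by
      have : Kbar * σ₁ ≤ Kbar * S := mul_le_mul_of_nonneg_left hS hK.le
      nlinarith [sq_nonneg (z t)]
    set C := (Kbar * δ) ^ 2 / (2 * k₅) with hC
    clear_value C
    have hCk : 2 * k₅ * C = (Kbar * δ) ^ 2 := by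
      rw [hC]; field_simp
    have hyoung : Kbar * δ * |z t| ≤ k₅ / 2 * z t ^ 2 + C := by
      rw [← sq_abs (z t)]
      have key : 2 * k₅ * (Kbar * δ * |z t|) ≤ 2 * k₅ * (k₅ / 2 * |z t| ^ 2 + C) := by
        nlinarith [sq_nonneg (Kbar * δ - k₅ * |z t|), hCk]
      exact (mul_le_mul_iff_right₀ (by positivity)).mp key
    nlinarith [h1, h2, h3, hyoung]
  · rw [hV t]; ring
end
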